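/- Let N and P be n×n complex matrices with P invertible and N · P = P · conj(N). If every eigenvector of N is also an eigenvector of the PT operator (i.e. for every nonzero ψ with N·ψ = ω·ψ for some ω ∈ ℂ there exists λ ∈ ℂ with P·conj(ψ) = λ·ψ), then every eigenvalue of N is real. -/
import Mathlib

open Matrix

/-- Full-spectrum form of property (ii) of PT-symmetric Hamiltonians: if PT symmetry is
unbroken (every eigenvector of `N` is also an eigenvector of the PT operator
`ψ ↦ P ⬝ conj ψ`), then every eigenvalue of `N` is real. -/
theorem stmt_9 {n : ℕ} (N P : Matrix (Fin n) (Fin n) ℂ)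
    (hP : IsUnit P)
    (hPT : N * P = P * N.map (starRingEnd ℂ))
    (hunbroken : ∀ (ω : ℂ) (ψ : Fin n → ℂ), ψ ≠ 0 → N.mulVec ψ = ω • ψ →
      ∃ lam : ℂ, P.mulVec (star ψ) = lam • ψ) :
    ∀ (ω : ℂ) (ψ : Fin n → ℂ), ψ ≠ 0 → N.mulVec ψ = ω • ψ → ω.im = 0 := by
  intro ω ψ hψ hNψ
  obtain ⟨lam, hlam⟩ := hunbroken ω ψ hψ hNψ
  have hconj : (N.map (starRingEnd ℂ)).mulVec (star ψ) = star (N.mulVec ψ) := by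
    ext j
    simp [Matrix.mulVec, dotProduct, map_sum]
  have h1 : N.mulVec (P.mulVec (star ψ)) = (starRingEnd ℂ ω) • P.mulVec (star ψ) := by
    rw [Matrix.mulVec_mulVec, hPT, ← Matrix.mulVec_mulVec, hconj, hNψ, star_smul,
      Matrix.mulVec_smul]
    rfl
  have hinj := Matrix.mulVec_injective_iff_isUnit.2 hP
  have hlamne : lam ≠ 0 := by
    intro h0
    subst h0
    simp only [zero_smul] at hlam
    have : star ψ = (0 : Fin n → ℂ) := by
      apply hinj
      simpa using hlam
    exact hψ (by simpa using congrArg star this)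
  rw [hlam, Matrix.mulVec_smul, hNψ] at h1
  have h1' : lam • ω • ψ = lam • (starRingEnd ℂ ω) • ψ := by rw [h1, smul_comm]
  have h3 : ω • ψ = (starRingEnd ℂ ω) • ψ := smul_right_injective (Fin n → ℂ) hlamne h1'
  obtain ⟨i, hi⟩ := Function.ne_iff.mp hψ
  have h4 : ω = starRingEnd ℂ ω := by
    have := congrFun h3 i
    simp only [Pi.smul_apply, smul_eq_mul] at this
    exact mul_right_cancel₀ hi this
  have := congrArg Complex.im h4
  simp at this
  linarith
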